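/- Assume A·Z − M² > |B·Z − M·N| (inequality (In2)) and −A ≥ |B| (inequality (In3)). Then for every real ω, |p(iω)| > |g(iω)|. Consequently, for every τ ≥ 0 and every nonzero real ω, p(iω)² ≠ e^{−iωτ}·g(iω)²; that is, the quasipolynomial Q_τ(λ) = p(λ)² − e^{−λτ}·g(λ)² has no purely imaginary roots. -/

import Mathlib

/-- `p(λ) = λ² - (k1 A + k3 Z) λ + k1 k3 (A Z - M²)`, over `ℂ`. -/
noncomputable def pq (A Z M k1 k3 : ℝ) (l : ℂ) : ℂ :=
  l ^ 2 - ((k1 * A + k3 * Z : ℝ) : ℂ) * l + ((k1 * k3 * (A * Z - M ^ 2) : ℝ) : ℂ)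

/-- `g(λ) = k1 B λ - k1 k3 B Z + k1 k3 M N`, over `ℂ`. -/
noncomputable def gq (Z M B N k1 k3 : ℝ) (l : ℂ) : ℂ :=
  ((k1 * B : ℝ) : ℂ) * l - ((k1 * k3 * B * Z : ℝ) : ℂ) + ((k1 * k3 * M * N : ℝ) : ℂ)

lemma key_ineq (A Z M B N k1 k3 ω : ℝ) (hk1 : 0 < k1) (hk3 : 0 < k3)
    (hIn2 : A * Z - M ^ 2 > |B * Z - M * N|) (hIn3 : -A ≥ |B|) :
    (k1 * k3 * B * Z - k1 * k3 * M * N) ^ 2 + (k1 * B * ω) ^ 2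
      < (k1 * k3 * (A * Z - M ^ 2) - ω ^ 2) ^ 2 + ((k1 * A + k3 * Z) * ω) ^ 2 := by
  have hB2 : B ^ 2 ≤ A ^ 2 := by
    have h1 := abs_nonneg B
    nlinarith [sq_abs B]
  have hD2 : (B * Z - M * N) ^ 2 < (A * Z - M ^ 2) ^ 2 := by
    have h1 := abs_nonneg (B * Z - M * N)
    nlinarith [sq_abs (B * Z - M * N)]
  nlinarith [mul_pos (pow_pos (mul_pos hk1 hk3) 2) (sub_pos.mpr hD2),
    mul_nonneg (sq_nonneg ω) (mul_nonneg (sq_nonneg k1) (sub_nonneg.mpr hB2)),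
    mul_nonneg (sq_nonneg ω) (mul_nonneg (mul_nonneg (mul_pos hk1 hk3).le (by norm_num : (0:ℝ) ≤ 2)) (sq_nonneg M)),
    sq_nonneg (k3 * Z * ω), sq_nonneg (ω ^ 2)]

/-- under (In2) and (In3), `|p(iω)| > |g(iω)|` for every real `ω`;
consequently the quasipolynomial `Q_τ(λ) = p(λ)² - e^{-λτ} g(λ)²` has no purely
imaginary roots for any delay `τ ≥ 0`. -/
theorem stmt_16 (A Z M B N k1 k3 : ℝ) (hk1 : 0 < k1) (hk3 : 0 < k3)
    (hIn2 : A * Z - M ^ 2 > |B * Z - M * N|) (hIn3 : -A ≥ |B|) :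
    (∀ ω : ℝ, ‖pq A Z M k1 k3 ((ω : ℂ) * Complex.I)‖
        > ‖gq Z M B N k1 k3 ((ω : ℂ) * Complex.I)‖)
    ∧ ∀ τ : ℝ, 0 ≤ τ → ∀ ω : ℝ, ω ≠ 0 →
        (pq A Z M k1 k3 ((ω : ℂ) * Complex.I)) ^ 2
          ≠ Complex.exp (-((ω : ℂ) * Complex.I * τ))
              * (gq Z M B N k1 k3 ((ω : ℂ) * Complex.I)) ^ 2 := by
  have hmain : ∀ ω : ℝ, ‖pq A Z M k1 k3 ((ω : ℂ) * Complex.I)‖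
      > ‖gq Z M B N k1 k3 ((ω : ℂ) * Complex.I)‖ := by
    intro ω
    have hsq : (‖gq Z M B N k1 k3 ((ω : ℂ) * Complex.I)‖) ^ 2
        < (‖pq A Z M k1 k3 ((ω : ℂ) * Complex.I)‖) ^ 2 := by
      rw [Complex.sq_norm, Complex.sq_norm, Complex.normSq_apply, Complex.normSq_apply]
      have := key_ineq A Z M B N k1 k3 ω hk1 hk3 hIn2 hIn3
      simp [pq, gq, Complex.mul_re, Complex.mul_im, mul_pow, Complex.I_sq,
        ← Complex.ofReal_pow]
      nlinarith [this]
    exact lt_of_pow_lt_pow_left₀ 2 (norm_nonneg _) hsq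
  refine ⟨hmain, fun τ hτ ω hω heq => ?_⟩
  have habs : ‖(pq A Z M k1 k3 ((ω : ℂ) * Complex.I)) ^ 2‖
      = ‖Complex.exp (-((ω : ℂ) * Complex.I * τ))
          * (gq Z M B N k1 k3 ((ω : ℂ) * Complex.I)) ^ 2‖ := by rw [heq]
  rw [norm_mul, norm_pow, norm_pow, Complex.norm_exp] at habs
  have hre : (-((ω : ℂ) * Complex.I * τ)).re = 0 := by simp
  rw [hre, Real.exp_zero, one_mul] at habs
  have h := hmain ω
  have hg := norm_nonneg (gq Z M B N k1 k3 ((ω : ℂ) * Complex.I))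
  nlinarith [h, hg, habs]
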